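/- The quartic polynomial p(t) = 157t^4 + 2842t^3 + 19212t^2 + 57990t + 67147 is irreducible over ℚ. -/

import Mathlib

open Polynomial

noncomputable def P : ℤ[X] := C 157 * X ^ 4 + C 2842 * X ^ 3 + C 19212 * X ^ 2 + C 57990 * X + C 67147

lemma P_coeff4 : P.coeff 4 = 157 := by simp [P, coeff_X_pow, coeff_C, coeff_X]
lemma P_coeff3 : P.coeff 3 = 2842 := by simp [P, coeff_X_pow, coeff_C, coeff_X]

lemma P_primitive : P.IsPrimitive := by
  intro r hr
  rw [C_dvd_iff_dvd_coeff] at hr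
  have h4 : r ∣ 157 := P_coeff4 ▸ hr 4
  have h3 : r ∣ 2842 := P_coeff3 ▸ hr 3
  have : r ∣ 1 := by
    have : (1 : ℤ) = 887 * 157 + (-49) * 2842 := by norm_num
    rw [this]
    exact dvd_add (h4.mul_left _) (h3.mul_left _)
  exact isUnit_of_dvd_one this

instance : Fact (Nat.Prime 5) := ⟨by norm_num⟩

noncomputable def M : (ZMod 5)[X] := X ^ 4 + X ^ 3 + X ^ 2 + C 1

lemma M_monic : M.Monic := by unfold M; monicity!

lemma M_natDegree : M.natDegree = 4 := by unfold M; compute_degree!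

lemma M_eval (x : ZMod 5) : M.eval x = x ^ 4 + x ^ 3 + x ^ 2 + 1 := by
  simp [M]

lemma monic_deg2 {K : Type*} [Field K] (q : K[X]) (hq : q.Monic) (h : q.natDegree = 2) :
    q = X ^ 2 + C (q.coeff 1) * X + C (q.coeff 0) := by
  ext n
  rcases n with _ | _ | _ | n
  · simp [coeff_X_pow, coeff_C]
  · simp [coeff_X_pow, coeff_C]
  · have := hq.coeff_natDegree
    rw [h] at this
    simp [coeff_X_pow, coeff_C, this]
  · have h1 : q.natDegree < n + 3 := by omega
    rw [coeff_eq_zero_of_natDegree_lt h1]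
    simp [coeff_X_pow, coeff_C]

lemma no_quad : ¬ ∃ a b c d : ZMod 5, ∀ x : ZMod 5,
    (x ^ 2 + a * x + b) * (x ^ 2 + c * x + d) = x ^ 4 + x ^ 3 + x ^ 2 + 1 := by decide

lemma no_root : ∀ x : ZMod 5, x ^ 4 + x ^ 3 + x ^ 2 + 1 ≠ 0 := by decide

lemma M_irreducible : Irreducible M := by
  have hM1 : M ≠ 1 := fun h => by simpa [h] using M_natDegree
  rw [M_monic.irreducible_iff_lt_natDegree_lt hM1]
  intro q hq hdq hdvd
  rw [M_natDegree] at hdq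
  simp only [Finset.mem_Ioc] at hdq
  obtain ⟨h1, h2⟩ := hdq
  interval_cases hn : q.natDegree
  · -- degree 1
    obtain ⟨c, rfl⟩ : ∃ c, q = X + C c := ⟨q.coeff 0, hq.eq_X_add_C hn⟩
    have : IsRoot M (-c) := by
      rw [← dvd_iff_isRoot]
      simpa [sub_neg_eq_add] using hdvd
    rw [IsRoot, M_eval] at this
    exact no_root _ this
  · -- degree 2
    obtain ⟨r, hr⟩ := hdvd
    have hrm : r.Monic := hq.of_mul_monic_left (hr ▸ M_monic)
    have hrd : r.natDegree = 2 := by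
      have := M_natDegree
      rw [hr, hq.natDegree_mul hrm, hn] at this
      omega
    apply no_quad
    refine ⟨q.coeff 1, q.coeff 0, r.coeff 1, r.coeff 0, fun x => ?_⟩
    have := congrArg (eval x) hr
    rw [M_eval, eval_mul] at this
    rw [monic_deg2 q hq hn] at this
    rw [monic_deg2 r hrm hrd] at this
    simpa using this.symm

lemma map_P : P.map (Int.castRingHom (ZMod 5)) = C 2 * M := by
  simp only [P, M, Polynomial.map_add, Polynomial.map_mul, Polynomial.map_pow,
    Polynomial.map_X, map_C]
  have h1 : ((157 : ℤ) : ZMod 5) = 2 := by decide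
  have h2 : ((2842 : ℤ) : ZMod 5) = 2 := by decide
  have h3 : ((19212 : ℤ) : ZMod 5) = 2 := by decide
  have h4 : ((57990 : ℤ) : ZMod 5) = 0 := by decide
  have h5 : ((67147 : ℤ) : ZMod 5) = 2 := by decide
  simp only [eq_intCast, h1, h2, h3, h4, h5, C_0, C_1]
  ring

lemma mapP_irreducible : Irreducible (P.map (Int.castRingHom (ZMod 5))) := by
  rw [map_P]
  have hu : IsUnit (C (2 : ZMod 5)) := isUnit_C.mpr (by decide)
  exact (irreducible_isUnit_mul hu).mpr M_irreducible

lemma P_irreducible : Irreducible P := by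
  have hmap := mapP_irreducible
  have hP0 : P ≠ 0 := fun h => by rw [h, Polynomial.map_zero] at hmap; exact not_irreducible_zero hmap
  have hdeg : (P.map (Int.castRingHom (ZMod 5))).natDegree = P.natDegree := by
    rw [map_P]
    have : P.natDegree = 4 := by
      have h1 : P.natDegree ≤ 4 := by unfold P; compute_degree
      have h2 : P.coeff 4 ≠ 0 := by rw [P_coeff4]; norm_num
      exact le_antisymm h1 (le_natDegree_of_ne_zero h2)
    rw [this, natDegree_C_mul (by decide : (2 : ZMod 5) ≠ 0), M_natDegree]
  constructor
  · intro hu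
    exact hmap.not_isUnit (hu.map (mapRingHom (Int.castRingHom (ZMod 5))))
  · intro a b hab
    have hab' : P.map (Int.castRingHom (ZMod 5)) =
        a.map (Int.castRingHom (ZMod 5)) * b.map (Int.castRingHom (ZMod 5)) := by
      rw [hab, Polynomial.map_mul]
    have ha0 : a ≠ 0 := fun h => hP0 (by simp [hab, h])
    have hb0 : b ≠ 0 := fun h => hP0 (by simp [hab, h])
    have hma0 : a.map (Int.castRingHom (ZMod 5)) ≠ 0 := by
      intro h
      rw [hab', h, zero_mul] at hmap
      exact not_irreducible_zero hmap
    have hmb0 : b.map (Int.castRingHom (ZMod 5)) ≠ 0 := by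
      intro h
      rw [hab', h, mul_zero] at hmap
      exact not_irreducible_zero hmap
    rcases hmap.isUnit_or_isUnit hab' with hu | hu
    · left
      have hda : (a.map (Int.castRingHom (ZMod 5))).natDegree = 0 :=
        natDegree_eq_zero_of_isUnit hu
      have hsum : P.natDegree = a.natDegree + b.natDegree := by
        rw [hab]; exact natDegree_mul ha0 hb0
      have hsum' : (a.map (Int.castRingHom (ZMod 5))).natDegree +
          (b.map (Int.castRingHom (ZMod 5))).natDegree = P.natDegree := by
        rw [← hdeg, hab', natDegree_mul hma0 hmb0]
      have hb_le : (b.map (Int.castRingHom (ZMod 5))).natDegree ≤ b.natDegree :=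
        natDegree_map_le
      have hadeg : a.natDegree = 0 := by omega
      obtain ⟨c, rfl⟩ := natDegree_eq_zero.mp hadeg
      have : IsUnit c := P_primitive c ⟨b, hab⟩
      exact this.map C
    · right
      have hda : (b.map (Int.castRingHom (ZMod 5))).natDegree = 0 :=
        natDegree_eq_zero_of_isUnit hu
      have hsum : P.natDegree = a.natDegree + b.natDegree := by
        rw [hab]; exact natDegree_mul ha0 hb0
      have hsum' : (a.map (Int.castRingHom (ZMod 5))).natDegree +
          (b.map (Int.castRingHom (ZMod 5))).natDegree = P.natDegree := by
        rw [← hdeg, hab', natDegree_mul hma0 hmb0]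
      have ha_le : (a.map (Int.castRingHom (ZMod 5))).natDegree ≤ a.natDegree :=
        natDegree_map_le
      have hbdeg : b.natDegree = 0 := by omega
      obtain ⟨c, rfl⟩ := natDegree_eq_zero.mp hbdeg
      have : IsUnit c := P_primitive c ⟨a, by rw [hab, mul_comm]⟩
      exact this.map C

/-- The quartic polynomial p(t) = 157t^4 + 2842t^3 + 19212t^2 + 57990t + 67147
    is irreducible over ℚ. -/
theorem quartic_irreducible :
    Irreducible
      (157 * X ^ 4 + 2842 * X ^ 3 + 19212 * X ^ 2 + 57990 * X + 67147 :
        Polynomial ℚ) := by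
  have h := (IsPrimitive.Int.irreducible_iff_irreducible_map_cast P_primitive).mp P_irreducible
  have : P.map (Int.castRingHom ℚ) =
      (157 * X ^ 4 + 2842 * X ^ 3 + 19212 * X ^ 2 + 57990 * X + 67147 : Polynomial ℚ) := by
    simp only [P, Polynomial.map_add, Polynomial.map_mul, Polynomial.map_pow,
      Polynomial.map_X, map_C, eq_intCast]
    norm_num [map_ofNat]
  rwa [this] at h
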